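/- Fix γ > 0, write γ_x = (1+γ)^x − 1 for real x > 0, and let S = S(γ) = sup_{j≥1} Σ_{i=0}^∞ γ_j/γ_{j+i}. Let α be a real number with α > 1 + 2S and γ_{a/2}/γ_a < 1/S, where a = ⌊α⌋. Define t_j = 0 for integers 0 ≤ j ≤ a − 1 and t_j = (1 − (α − a))·γ/γ_a + Σ_{i=1}^{j−a} γ/γ_{a+i} for integers j ≥ a. Then for every n ≥ 0 and every integer 1 ≤ j ≤ a + n: min(j, α)·γ/γ_j > (t_{a+n−1} − t_{j−1}) + γ/γ_{a+n}. -/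

import Mathlib

open Finset

lemma auxBK_pos {γ : ℝ} (hγ : 0 < γ) {m : ℕ} (hm : 1 ≤ m) : 0 < (1 + γ) ^ m - 1 := by
  have : (1:ℝ) < (1 + γ) ^ m := one_lt_pow₀ (by linarith) (by omega)
  linarith

lemma auxBK_mono {γ : ℝ} (hγ : 0 < γ) {m k : ℕ} (hmk : m ≤ k) :
    (1 + γ) ^ m - 1 ≤ (1 + γ) ^ k - 1 := by
  have := pow_le_pow_right₀ (a := 1 + γ) (by linarith) hmk
  linarith

lemma auxBK_term_le {γ : ℝ} (hγ : 0 < γ) {m : ℕ} (hm : 1 ≤ m) (i : ℕ) :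
    ((1 + γ) ^ m - 1) / ((1 + γ) ^ (m + i) - 1) ≤ ((1 + γ)⁻¹) ^ i := by
  have hq : (0:ℝ) < 1 + γ := by linarith
  have h1 : (1:ℝ) ≤ (1 + γ) ^ i := one_le_pow₀ (by linarith)
  have hpos : 0 < (1 + γ) ^ (m + i) - 1 := auxBK_pos hγ (by omega)
  have hshift : ((1 + γ) ^ m - 1) * (1 + γ) ^ i ≤ (1 + γ) ^ (m + i) - 1 := by
    rw [pow_add]; nlinarith [pow_pos hq m]
  rw [div_le_iff₀ hpos, inv_pow, inv_mul_eq_div, le_div_iff₀ (pow_pos hq i)]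
  linarith

lemma auxBK_summable {γ : ℝ} (hγ : 0 < γ) {m : ℕ} (hm : 1 ≤ m) :
    Summable (fun i : ℕ => ((1 + γ) ^ m - 1) / ((1 + γ) ^ (m + i) - 1)) := by
  have hq : (0:ℝ) < 1 + γ := by linarith
  refine Summable.of_nonneg_of_le (fun i => ?_) (fun i => auxBK_term_le hγ hm i) ?_
  · exact div_nonneg (le_of_lt (auxBK_pos hγ hm)) (le_of_lt (auxBK_pos hγ (by omega)))
  · exact summable_geometric_of_lt_one (by positivity)
      (inv_lt_one_of_one_lt₀ (by linarith))

lemma auxBK_tsum_le {γ : ℝ} (hγ : 0 < γ) {m : ℕ} (hm : 1 ≤ m) :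
    ∑' i : ℕ, ((1 + γ) ^ m - 1) / ((1 + γ) ^ (m + i) - 1) ≤ (1 + γ) / γ := by
  have hq : (0:ℝ) < 1 + γ := by linarith
  have h := Summable.tsum_le_tsum (fun i => auxBK_term_le hγ hm i) (auxBK_summable hγ hm)
    (summable_geometric_of_lt_one (by positivity) (inv_lt_one_of_one_lt₀ (by linarith)))
  rw [tsum_geometric_of_lt_one (by positivity) (inv_lt_one_of_one_lt₀ (by linarith))] at h
  have : (1 - (1+γ)⁻¹)⁻¹ = (1 + γ) / γ := by
    rw [eq_div_iff (ne_of_gt hγ)]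
    field_simp
    rw [add_sub_cancel_left, div_self (ne_of_gt hγ)]
  linarith [this ▸ h]

-- (1+γ)^m - 1 ≤ m * γ * (1+γ)^m
lemma auxBK_upper {γ : ℝ} (hγ : 0 < γ) (m : ℕ) :
    (1 + γ) ^ m - 1 ≤ (m : ℝ) * γ * (1 + γ) ^ m := by
  induction m with
  | zero => simp
  | succ k ih =>
      have hq : (0:ℝ) < 1 + γ := by linarith
      have h1 : (1:ℝ) ≤ (1 + γ) ^ (k+1) := one_le_pow₀ (by linarith)
      have hpk : (0:ℝ) < (1 + γ) ^ k := pow_pos hq k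
      have h1' : (1:ℝ) ≤ (1 + γ) ^ k * (1 + γ) := by rw [← pow_succ]; exact h1
      push_cast
      rw [pow_succ]
      nlinarith [mul_le_mul_of_nonneg_right ih hq.le, mul_le_mul_of_nonneg_left h1' hγ.le]

-- monotonicity of j ↦ j*γ/((1+γ)^j - 1), decreasing
lemma auxBK_jmono {γ : ℝ} (hγ : 0 < γ) {j k : ℕ} (hj : 1 ≤ j) (hjk : j ≤ k) :
    (k : ℝ) * γ / ((1 + γ) ^ k - 1) ≤ (j : ℝ) * γ / ((1 + γ) ^ j - 1) := by
  induction k with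
  | zero => omega
  | succ m ih =>
      rcases Nat.lt_or_ge j (m+1) with h | h
      · have hjm : j ≤ m := by omega
        refine le_trans ?_ (ih hjm)
        have hpm : 0 < (1 + γ) ^ m - 1 := auxBK_pos hγ (by omega)
        have hpm1 : 0 < (1 + γ) ^ (m+1) - 1 := auxBK_pos hγ (by omega)
        rw [div_le_div_iff₀ hpm1 hpm]
        have key : ((m:ℝ)+1) * ((1+γ)^m - 1) ≤ (m:ℝ) * ((1+γ)^(m+1) - 1) := by
          have := auxBK_upper hγ m
          rw [pow_succ]
          nlinarith [pow_pos (show (0:ℝ) < 1 + γ by linarith) m]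
        push_cast
        nlinarith
      · have : j = m + 1 := by omega
        subst this
        exact le_refl _

/-- Fix `γ > 0`, write `γ_x = (1+γ)^x − 1`, and let
`S = S(γ) = sup_{j≥1} Σ_{i=0}^∞ γ_j/γ_{j+i}`.  Let `α > 1 + 2S` with
`γ_{a/2}/γ_a < 1/S`, where `a = ⌊α⌋`.  With `t_j = 0` for `0 ≤ j ≤ a − 1` and
`t_j = (1 − (α − a))·γ/γ_a + Σ_{i=1}^{j−a} γ/γ_{a+i}` for `j ≥ a`, one has, for every
`n ≥ 0` and every integer `1 ≤ j ≤ a + n`: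
`min(j, α)·γ/γ_j > (t_{a+n−1} − t_{j−1}) + γ/γ_{a+n}`. -/
theorem blowup_key_bound (γ α : ℝ) (hγ : 0 < γ) (S : ℝ)
    (hS : S = ⨆ j : ℕ, ∑' i : ℕ, ((1 + γ) ^ (j + 1) - 1) / ((1 + γ) ^ (j + 1 + i) - 1))
    (hα : 1 + 2 * S < α) (a : ℕ) (ha : a = ⌊α⌋₊)
    (hhalf : (1 + γ) ^ ((a : ℝ) / 2) - 1 < ((1 + γ) ^ a - 1) / S)
    (t : ℕ → ℝ)
    (ht0 : ∀ j : ℕ, j < a → t j = 0)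
    (ht : ∀ j : ℕ, a ≤ j → t j = (1 - (α - a)) * γ / ((1 + γ) ^ a - 1) +
      ∑ i ∈ Finset.Icc 1 (j - a), γ / ((1 + γ) ^ (a + i) - 1)) :
    ∀ n : ℕ, ∀ j : ℕ, 1 ≤ j → j ≤ a + n →
      (t (a + n - 1) - t (j - 1)) + γ / ((1 + γ) ^ (a + n) - 1) <
        min (j : ℝ) α * γ / ((1 + γ) ^ j - 1) := by
  have hq : (0:ℝ) < 1 + γ := by linarith
  set F : ℕ → ℝ :=
    fun j => ∑' i : ℕ, ((1 + γ) ^ (j + 1) - 1) / ((1 + γ) ^ (j + 1 + i) - 1) with hF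
  have hbdd : BddAbove (Set.range F) := by
    refine ⟨(1 + γ) / γ, ?_⟩
    rintro _ ⟨j, rfl⟩
    exact auxBK_tsum_le hγ (m := j + 1) (by omega)
  have hFS : ∀ j, F j ≤ S := by
    intro j; rw [hS]; exact le_ciSup hbdd j
  have hS1 : (1:ℝ) ≤ S := by
    refine le_trans ?_ (hFS 0)
    have hsm := auxBK_summable hγ (m := 0 + 1) (by omega)
    have h := Summable.le_tsum hsm 0 (fun i _ =>
      div_nonneg (auxBK_pos hγ (m := 0+1) (by omega)).le
        (auxBK_pos hγ (m := 0+1+i) (by omega)).le)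
    have h1 : ((1 + γ) ^ (0+1) - 1) / ((1 + γ) ^ (0 + 1 + 0) - 1) = 1 :=
      div_self (ne_of_gt (auxBK_pos hγ (by omega)))
    rw [h1] at h
    exact h
  have hα0 : (0:ℝ) ≤ α := by linarith
  have haα : (a:ℝ) ≤ α := by rw [ha]; exact Nat.floor_le hα0
  have hαa1 : α < (a:ℝ) + 1 := by rw [ha]; exact_mod_cast Nat.lt_floor_add_one α
  have ha3 : 3 ≤ a := by
    rw [ha]; exact Nat.le_floor (by push_cast; linarith)
  have ha3' : (3:ℝ) ≤ (a:ℝ) := by exact_mod_cast ha3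
  have hSa : S ≤ (a:ℝ) - 1 := by linarith
  -- partial sums are < (γ / γ_m) * S
  have hsumlt : ∀ m N : ℕ,
      ∑ k ∈ Finset.range N, γ / ((1 + γ) ^ (m + 1 + k) - 1)
        < γ / ((1 + γ) ^ (m + 1) - 1) * S := by
    intro m N
    have hgm : 0 < (1 + γ) ^ (m + 1) - 1 := auxBK_pos hγ (by omega)
    have hsm := auxBK_summable hγ (m := m + 1) (by omega)
    have hnn : ∀ i : ℕ, 0 ≤ ((1 + γ) ^ (m + 1) - 1) / ((1 + γ) ^ (m + 1 + i) - 1) :=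
      fun i => div_nonneg hgm.le (auxBK_pos hγ (m := m+1+i) (by omega)).le
    have h2 : ∑ k ∈ Finset.range (N + 1),
        ((1 + γ) ^ (m + 1) - 1) / ((1 + γ) ^ (m + 1 + k) - 1) ≤ F m :=
      Summable.sum_le_tsum _ (fun i _ => hnn i) hsm
    have h1 : ∑ k ∈ Finset.range N,
        ((1 + γ) ^ (m + 1) - 1) / ((1 + γ) ^ (m + 1 + k) - 1)
        < ∑ k ∈ Finset.range (N + 1),
        ((1 + γ) ^ (m + 1) - 1) / ((1 + γ) ^ (m + 1 + k) - 1) := by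
      rw [Finset.sum_range_succ]
      have : 0 < ((1 + γ) ^ (m + 1) - 1) / ((1 + γ) ^ (m + 1 + N) - 1) :=
        div_pos hgm (auxBK_pos hγ (by omega))
      linarith
    have h3 : ∑ k ∈ Finset.range N,
        ((1 + γ) ^ (m + 1) - 1) / ((1 + γ) ^ (m + 1 + k) - 1) < S :=
      lt_of_lt_of_le h1 (le_trans h2 (hFS m))
    have heq : ∀ k ∈ Finset.range N, γ / ((1 + γ) ^ (m + 1 + k) - 1)
        = γ / ((1 + γ) ^ (m + 1) - 1)
          * (((1 + γ) ^ (m + 1) - 1) / ((1 + γ) ^ (m + 1 + k) - 1)) := by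
      intro k _
      have h := auxBK_pos hγ (m := m + 1 + k) (by omega)
      field_simp
    rw [Finset.sum_congr rfl heq, ← Finset.mul_sum]
    exact mul_lt_mul_of_pos_left h3 (div_pos hγ hgm)
  -- main proof
  intro n j hj1 hj2
  have hgj : 0 < (1 + γ) ^ j - 1 := auxBK_pos hγ hj1
  have hga : 0 < (1 + γ) ^ a - 1 := auxBK_pos hγ (by omega)
  rcases le_or_gt j a with hja | hja
  · -- j ≤ a
    have htj : t (j - 1) = 0 := ht0 _ (by omega)
    have hmin : min (j:ℝ) α = j := by
      refine min_eq_left ?_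
      have : (j:ℝ) ≤ (a:ℝ) := by exact_mod_cast hja
      linarith
    have hmono := auxBK_jmono hγ hj1 hja
    have hjcast : (1:ℝ) ≤ (j:ℝ) := by exact_mod_cast hj1
    rw [hmin, htj]
    rcases Nat.eq_zero_or_pos n with rfl | hn
    · have h0 : t (a + 0 - 1) = 0 := ht0 _ (by omega)
      rw [h0]
      simp only [Nat.add_zero]
      have hlt : γ / ((1 + γ) ^ a - 1) < (a:ℝ) * γ / ((1 + γ) ^ a - 1) := by
        rw [div_lt_div_iff₀ hga hga]
        nlinarith [mul_pos hγ hga]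
      linarith
    · obtain ⟨m, rfl⟩ : ∃ m, n = m + 1 := ⟨n - 1, by omega⟩
      have hidx : a + (m + 1) - 1 = a + m := by omega
      rw [hidx, ht (a + m) (by omega)]
      have hidx2 : a + m - a = m := by omega
      rw [hidx2]
      -- turn Icc-sum + last term into a range-sum
      have hIcc : ∑ i ∈ Finset.Icc 1 m, γ / ((1 + γ) ^ (a + i) - 1)
          + γ / ((1 + γ) ^ (a + (m + 1)) - 1)
          = ∑ k ∈ Finset.range (m + 1), γ / ((1 + γ) ^ (a + 1 + k) - 1) := by
        rw [← Finset.sum_Icc_succ_top (by omega : 1 ≤ m + 1)]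
        rw [← Finset.Ico_add_one_right_eq_Icc, Finset.sum_Ico_eq_sum_range]
        refine Finset.sum_congr (by norm_num) (fun k _ => ?_)
        have : a + (1 + k) = a + 1 + k := by omega
        rw [this]
      have hlt := hsumlt a (m + 1)
      have hc : (1 - (α - (a:ℝ))) * γ / ((1 + γ) ^ a - 1) ≤ γ / ((1 + γ) ^ a - 1) := by
        rw [div_le_div_iff₀ hga hga]
        nlinarith [mul_nonneg (mul_pos hγ hga).le (by linarith : (0:ℝ) ≤ α - (a:ℝ))]
      have hg1 : γ / ((1 + γ) ^ (a + 1) - 1) ≤ γ / ((1 + γ) ^ a - 1) := by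
        have hga1 : 0 < (1 + γ) ^ (a + 1) - 1 := auxBK_pos hγ (by omega)
        rw [div_le_div_iff₀ hga1 hga]
        nlinarith [auxBK_mono hγ (by omega : a ≤ a + 1)]
      have hmul : γ / ((1 + γ) ^ (a + 1) - 1) * S ≤ γ / ((1 + γ) ^ a - 1) * ((a:ℝ) - 1) :=
        mul_le_mul hg1 hSa (by linarith) (div_pos hγ hga).le
      have hfin : γ / ((1 + γ) ^ a - 1) + γ / ((1 + γ) ^ a - 1) * ((a:ℝ) - 1)
          = (a:ℝ) * γ / ((1 + γ) ^ a - 1) := by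
        field_simp; ring
      linarith
  · -- a < j
    obtain ⟨p, rfl⟩ : ∃ p, j = a + p + 1 := ⟨j - a - 1, by omega⟩
    have hpn : p + 1 ≤ n := by omega
    have hmin : min ((a + p + 1 : ℕ) : ℝ) α = α := by
      refine min_eq_right ?_
      have : ((a:ℝ)) + 1 ≤ ((a + p + 1 : ℕ) : ℝ) := by push_cast; linarith [Nat.cast_nonneg (α := ℝ) p]
      linarith
    rw [hmin]
    have ht1 : t (a + n - 1) = (1 - (α - a)) * γ / ((1 + γ) ^ a - 1) +
        ∑ i ∈ Finset.Icc 1 (n - 1), γ / ((1 + γ) ^ (a + i) - 1) := by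
      rw [show a + n - 1 = a + (n - 1) by omega, ht _ (by omega),
        show a + (n - 1) - a = n - 1 by omega]
    have ht2 : t (a + p + 1 - 1) = (1 - (α - a)) * γ / ((1 + γ) ^ a - 1) +
        ∑ i ∈ Finset.Icc 1 p, γ / ((1 + γ) ^ (a + i) - 1) := by
      rw [show a + p + 1 - 1 = a + p by omega, ht _ (by omega),
        show a + p - a = p by omega]
    rw [ht1, ht2]
    have hIC : ∀ x : ℕ, Finset.Ioc 0 x = Finset.Icc 1 x := by
      intro x; rw [← Finset.Icc_add_one_left_eq_Ioc, zero_add]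
    have hsplit := Finset.sum_Ioc_consecutive
      (fun i => γ / ((1 + γ) ^ (a + i) - 1)) (Nat.zero_le p) (show p ≤ n - 1 by omega)
    rw [hIC, hIC] at hsplit
    have htop := Finset.sum_Ioc_succ_top (show p ≤ n - 1 by omega)
      (fun i => γ / ((1 + γ) ^ (a + i) - 1))
    rw [show n - 1 + 1 = n by omega] at htop
    -- now convert ∑ Ioc p n to range sum
    have hrange : ∑ i ∈ Finset.Ioc p n, γ / ((1 + γ) ^ (a + i) - 1)
        = ∑ k ∈ Finset.range (n - p), γ / ((1 + γ) ^ (a + p + 1 + k) - 1) := by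
      rw [← Finset.Ico_add_one_add_one_eq_Ioc, Finset.sum_Ico_eq_sum_range]
      refine Finset.sum_congr (by congr 1; omega) (fun k _ => ?_)
      rw [show a + (p + 1 + k) = a + p + 1 + k by omega]
    have hlt := hsumlt (a + p) (n - p)
    rw [show a + p + 1 = a + (p + 1) from rfl] at hlt
    have hgj' : 0 < (1 + γ) ^ (a + (p + 1)) - 1 := auxBK_pos hγ (by omega)
    have hSα : γ / ((1 + γ) ^ (a + (p + 1)) - 1) * S
        < γ / ((1 + γ) ^ (a + (p + 1)) - 1) * α :=
      mul_lt_mul_of_pos_left (by linarith) (div_pos hγ hgj')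
    have hfin : γ / ((1 + γ) ^ (a + (p + 1)) - 1) * α
        = α * γ / ((1 + γ) ^ (a + (p + 1)) - 1) := by ring
    rw [show a + p + 1 = a + (p + 1) from rfl] at hrange ⊢
    linarith
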